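/- Let q ≥ 1 be a real number. For every u ∈ Ω and every real λ with -(q+1) ≤ λ ≤ q+1, the complex number 1 - λu + qu² does not lie in the set (-∞, 0] of non-positive real numbers. -/

import Mathlib

/-- The interior `Ω` of the region `C`: `|u| < q^(-1/2)`, and if `u` is real
then `|u| < 1/q`. -/
def Omega (q : ℝ) : Set ℂ :=
  {u : ℂ | ‖u‖ < (Real.sqrt q)⁻¹ ∧ (u.im = 0 → |u.re| < 1 / q)}

/-- For `u ∈ Ω` and `λ ∈ [-(q+1), q+1]`, the number `1 - λu + qu²` does not lie
in `(-∞, 0]`, i.e. it lies in the slit plane `ℂ \ (-∞, 0]`. -/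
theorem one_sub_mul_add_sq_mem_slitPlane (q : ℝ) (hq : 1 ≤ q)
    (u : ℂ) (hu : u ∈ Omega q) (lam : ℝ)
    (hlam₁ : -(q + 1) ≤ lam) (hlam₂ : lam ≤ q + 1) :
    (1 - (lam : ℂ) * u + (q : ℂ) * u ^ 2) ∈ Complex.slitPlane := by
  obtain ⟨habs, hreal⟩ := hu
  have hq0 : (0:ℝ) < q := lt_of_lt_of_le one_pos hq
  set x := u.re with hx
  set y := u.im with hy
  have hre : (1 - (lam : ℂ) * u + (q : ℂ) * u ^ 2).re
      = 1 - lam * x + q * (x * x - y * y) := by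
    simp [Complex.mul_re, Complex.mul_im, pow_two]
    rfl
  have him : (1 - (lam : ℂ) * u + (q : ℂ) * u ^ 2).im
      = y * (2 * q * x - lam) := by
    simp [Complex.mul_re, Complex.mul_im, pow_two]
    ring
  rw [Complex.mem_slitPlane_iff]
  by_cases hy0 : y = 0
  · left
    have hxlt := hreal hy0
    have h1 : -(1/q) < x := by
      have := abs_lt.mp hxlt; linarith [this.1]
    have h2 : x < 1/q := (abs_lt.mp hxlt).2
    have hx1 : x < 1 := lt_of_lt_of_le h2 (by rw [div_le_one hq0]; exact hq)
    have hx2 : -1 < x := by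
      have : (1:ℝ)/q ≤ 1 := by rw [div_le_one hq0]; exact hq
      linarith
    have hqx1 : q * x < 1 := by
      have := (lt_div_iff₀ hq0).mp h2; linarith
    have hqx2 : -1 < q * x := by
      have : -(1/q) * q < x * q := by exact mul_lt_mul_of_pos_right h1 hq0
      field_simp at this; nlinarith
    rw [hre, hy0]
    rcases le_or_gt 0 x with hxs | hxs
    · nlinarith [mul_pos (by linarith : (0:ℝ) < 1 - x) (by linarith : (0:ℝ) < 1 - q * x),
        mul_nonneg hxs (by linarith : (0:ℝ) ≤ q + 1 - lam)]
    · nlinarith [mul_pos (by linarith : (0:ℝ) < 1 + x) (by linarith : (0:ℝ) < 1 + q * x),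
        mul_nonneg (by linarith : (0:ℝ) ≤ -x) (by linarith : (0:ℝ) ≤ q + 1 + lam)]
  · by_cases hl : 2 * q * x - lam = 0
    · left
      rw [hre]
      have hlam : lam = 2 * q * x := by linarith
      have hnorm : x * x + y * y < 1 / q := by
        have h1 : ‖u‖ ^ 2 < ((Real.sqrt q)⁻¹) ^ 2 := by
          apply pow_lt_pow_left₀ habs (norm_nonneg u) (by norm_num)
        rw [Complex.sq_norm, Complex.normSq_apply] at h1
        have : ((Real.sqrt q)⁻¹) ^ 2 = 1 / q := by
          rw [inv_pow, Real.sq_sqrt hq0.le, one_div]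
        rw [this] at h1
        exact h1
      have : q * (x * x + y * y) < 1 := by
        have := (mul_lt_mul_iff_right₀ hq0).mpr hnorm
        rwa [mul_one_div, div_self hq0.ne'] at this
      rw [hlam]; nlinarith
    · right
      rw [him]
      exact mul_ne_zero hy0 hl
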